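/- arXiv:1507.07053 — 2 statements merged into one kernel-verified Lean document; each statement's English description precedes it below -/
import Mathlib

section
/- Let q, p ∈ ℂ with q ≠ 0 and p² = q, and let Q1, Q2, Q3 ∈ ℂ with Q1Q2 ≠ q^n for every integer n. Then for every f ∈ ℂ[[x]], H f = 0 if and only if K f = 0. -/
/-- The substitution operator `S : ℂ[[x]] → ℂ[[x]]`, `(Sf)(x) = f(qx)`, sending
the `k`-th coefficient `c_k` to `q^k c_k`. -/
noncomputable def Sop (q : ℂ) : Module.End ℂ (PowerSeries ℂ) where
  toFun f := PowerSeries.rescale q f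
  map_add' f g := map_add _ f g
  map_smul' c f := by
    ext n
    simp [PowerSeries.coeff_rescale]
    ring

/-- Multiplication by `x` on `ℂ[[x]]`. -/
noncomputable def Mop : Module.End ℂ (PowerSeries ℂ) :=
  LinearMap.mulLeft ℂ (PowerSeries.X : PowerSeries ℂ)

/-- The operator `H(x, q^{x∂x})` of Section 5.2 of the paper. -/
noncomputable def Hop (q p Q1 Q2 Q3 : ℂ) : Module.End ℂ (PowerSeries ℂ) :=
  (1 - (Q1 * Q2 * q ^ (-2 : ℤ)) • Sop q) * (1 - (Q1 * Q2 * q ^ (-1 : ℤ)) • Sop q)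
  - ((1 + Q1 * Q3) * p) • (Mop * (1 - (Q1 * Q2 * q ^ (-1 : ℤ)) • Sop q))
  + (Q1 * Q3 * q) • (Mop * Mop)
  - (1 - (Q1 * Q2 * q ^ (-2 : ℤ)) • Sop q) * (1 - (Q1 * Q2 * q ^ (-1 : ℤ)) • Sop q) * Sop q
  + (Q1 * (1 + Q2 * Q3) * p) • (Mop * (1 - (Q1 * Q2 * q ^ (-1 : ℤ)) • Sop q) * Sop q)
  - (Q1 ^ 2 * Q2 * Q3 * q) • (Mop * Mop * Sop q)

/-- The operator `K(x, q^{x∂x})` of Section 5.2 of the paper. -/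
noncomputable def Kop (q p Q1 Q2 Q3 : ℂ) : Module.End ℂ (PowerSeries ℂ) :=
  (1 - (Q1 * Q2 * q ^ (-1 : ℤ)) • Sop q) * (1 - Sop q)
  - ((1 + Q1 * Q3) * p) • Mop
  + (Q1 * (1 + Q2 * Q3) * p) • (Mop * Sop q)
  + (Q1 * Q3 * q) • (Mop * Mop)

lemma Sop_apply (q : ℂ) (f : PowerSeries ℂ) : Sop q f = PowerSeries.rescale q f := rfl

lemma coeff_Sop (q : ℂ) (f : PowerSeries ℂ) (n : ℕ) :
    PowerSeries.coeff n (Sop q f) = q ^ n * PowerSeries.coeff n f :=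
  PowerSeries.coeff_rescale f q n

/-- The commutation relation `S M = q M S`. -/
lemma SM (q : ℂ) : Sop q * Mop = q • (Mop * Sop q) := by
  ext f n
  rcases n with _ | n <;>
  simp [Mop, Sop_apply, PowerSeries.coeff_rescale, Module.End.mul_apply,
    PowerSeries.coeff_succ_X_mul, pow_succ, mul_comm, mul_assoc, mul_left_comm]

lemma SM' (q : ℂ) (X : Module.End ℂ (PowerSeries ℂ)) :
    Sop q * (Mop * X) = q • (Mop * (Sop q * X)) := by
  rw [← mul_assoc, SM, smul_mul_assoc, mul_assoc]

/-- The factorization `H = (1 - Q1 Q2 q⁻² S) K`. -/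
lemma Hop_factor (q p Q1 Q2 Q3 : ℂ) (hq : q ≠ 0) :
    Hop q p Q1 Q2 Q3 = (1 - (Q1 * Q2 * q ^ (-2 : ℤ)) • Sop q) * Kop q p Q1 Q2 Q3 := by
  have e2 : q ^ (-2 : ℤ) = (q ^ (2:ℕ))⁻¹ := by
    rw [zpow_neg]; norm_cast
  have e1 : q ^ (-1 : ℤ) = (q ^ (1:ℕ))⁻¹ := by
    rw [zpow_neg]; norm_cast
  unfold Hop Kop
  rw [e1, e2]
  simp only [mul_sub, sub_mul, mul_add, add_mul, mul_one, one_mul, mul_assoc,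
    smul_mul_assoc, mul_smul_comm, SM, SM', smul_smul]
  match_scalars <;> field_simp <;> ring

/-- The operator `1 - Q1 Q2 q⁻² S` is injective under the genericity assumption. -/
lemma one_sub_smul_Sop_inj (q Q1 Q2 : ℂ) (hq : q ≠ 0)
    (hgen : ∀ n : ℤ, Q1 * Q2 ≠ q ^ n) (g : PowerSeries ℂ)
    (h : (1 - (Q1 * Q2 * q ^ (-2 : ℤ)) • Sop q) g = 0) : g = 0 := by
  ext n
  have hc := congrArg (PowerSeries.coeff n) h
  simp only [LinearMap.sub_apply, Module.End.one_apply, LinearMap.smul_apply,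
    map_sub, PowerSeries.coeff_smul, coeff_Sop, map_zero, smul_eq_mul] at hc
  have hfac : (1 - Q1 * Q2 * q ^ (-2 : ℤ) * q ^ n) * PowerSeries.coeff n g = 0 := by
    linear_combination hc
  have hne : 1 - Q1 * Q2 * q ^ (-2 : ℤ) * q ^ n ≠ 0 := by
    intro h0
    apply hgen (2 - n)
    have hQ : Q1 * Q2 * q ^ (-2 : ℤ) * q ^ n = 1 := by linear_combination -h0
    have hz : (q : ℂ) ^ (n : ℤ) = q ^ n := zpow_natCast q n
    have h1 : Q1 * Q2 * q ^ ((n:ℤ) - 2) = 1 := by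
      rw [sub_eq_add_neg, zpow_add₀ hq, hz]
      calc Q1 * Q2 * (q ^ n * q ^ (-2:ℤ)) = Q1 * Q2 * q ^ (-2:ℤ) * q ^ n := by ring
        _ = 1 := hQ
    have h2 : q ^ ((n:ℤ) - 2) * q ^ (2 - (n:ℤ)) = 1 := by
      rw [← zpow_add₀ hq]; norm_num
    calc Q1 * Q2 = Q1 * Q2 * (q ^ ((n:ℤ) - 2) * q ^ (2 - (n:ℤ))) := by rw [h2, mul_one]
      _ = Q1 * Q2 * q ^ ((n:ℤ) - 2) * q ^ (2 - (n:ℤ)) := by ring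
      _ = q ^ (2 - (n:ℤ)) := by rw [h1, one_mul]
  rcases mul_eq_zero.mp hfac with h1 | h2
  · exact absurd h1 hne
  · simp [h2]

/-- the Ψ-half of Theorem 4 of the paper: for generic values of
`Q1, Q2` (i.e. `Q1Q2 ≠ qⁿ` for every integer `n`), `Hf = 0` iff `Kf = 0`. -/
theorem closed_topological_vertex_H_reduces_to_K
    (q p Q1 Q2 Q3 : ℂ) (hq : q ≠ 0) (hp : p ^ 2 = q)
    (hgen : ∀ n : ℤ, Q1 * Q2 ≠ q ^ n) :
    ∀ f : PowerSeries ℂ, Hop q p Q1 Q2 Q3 f = 0 ↔ Kop q p Q1 Q2 Q3 f = 0 := by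
  intro f
  have hfac : Hop q p Q1 Q2 Q3 f
      = (1 - (Q1 * Q2 * q ^ (-2 : ℤ)) • Sop q) (Kop q p Q1 Q2 Q3 f) := by
    rw [Hop_factor q p Q1 Q2 Q3 hq]; rfl
  constructor
  · intro h
    exact one_sub_smul_Sop_inj q Q1 Q2 hq hgen _ (hfac ▸ h)
  · intro h
    rw [hfac, h, map_zero]
end

section
/- Let q, p ∈ ℂ with p² = q and 0 < |q| < 1, and let Q1, Q2, Q3 ∈ ℂ. The function Φ̃(x) := ∏_{i=1}^∞ [(1 + pq^{i−1}x)(1 + Q1Q3 pq^{i−1}x)] / [(1 + Q1 pq^{i−1}x)(1 + Q1Q2Q3 pq^{i−1}x)] is holomorphic in a neighborhood of 0 with Φ̃(0) = 1, and its Taylor coefficients b̃_k at 0 satisfy, for every k ≥ 0 (with b̃_{−1} = b̃_{−2} = 0), the recursion q^k b̃_k + (1+Q1Q3) p q^{k−1} b̃_{k−1} + Q1Q3 q^{k−1} b̃_{k−2} = b̃_k + Q1(1+Q2Q3) p b̃_{k−1} + Q1²Q2Q3 q b̃_{k−2}. -/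
/-- The factor of the infinite product `Φ̃(x)` indexed by (0-based) `i : ℕ`,
where `p` plays the role of `q^{1/2}`, so `p * q^i = q^{(i+1)−1/2}`. -/
noncomputable def PhiTildeFactor (q p Q1 Q2 Q3 x : ℂ) (i : ℕ) : ℂ :=
  ((1 + (p * q ^ i) * x) * (1 + Q1 * Q3 * (p * q ^ i) * x)) /
    ((1 + Q1 * (p * q ^ i) * x) * (1 + Q1 * Q2 * Q3 * (p * q ^ i) * x))

/-- The Taylor coefficients of a power series extended by `0` to negative
integer indices (the convention `b̃_{−1} = b̃_{−2} = 0`). -/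
noncomputable def extendedCoeff (F : FormalMultilinearSeries ℂ ℂ ℂ) (m : ℤ) : ℂ :=
  if 0 ≤ m then F.coeff m.toNat else 0


open Complex Metric

noncomputable def lterm (q a x : ℂ) (i : ℕ) : ℂ := Complex.log (1 + a * q ^ i * x)

lemma abs_aux {q a x : ℂ} (hq : ‖q‖ ≤ 1) (hax : ‖a‖ * ‖x‖ ≤ 1/2)
    (i : ℕ) : ‖(a * q ^ i * x)‖ ≤ 1/2 := by
  have h1 : ‖(a * q ^ i * x)‖
      = ‖a‖ * ‖q‖ ^ i * ‖x‖ := by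
    simp [map_mul, map_pow]
  rw [h1]
  have hqi : ‖q‖ ^ i ≤ 1 := pow_le_one₀ (norm_nonneg q) hq
  calc ‖a‖ * ‖q‖ ^ i * ‖x‖
      ≤ ‖a‖ * 1 * ‖x‖ := by gcongr
    _ = ‖a‖ * ‖x‖ := by ring
    _ ≤ 1/2 := hax

lemma lterm_bound {q a x : ℂ} (hq : ‖q‖ ≤ 1)
    (hax : ‖a‖ * ‖x‖ ≤ 1/2) (i : ℕ) :
    ‖lterm q a x i‖ ≤ 3/2 * (‖a‖ * ‖x‖) * ‖q‖ ^ i := by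
  have h := Complex.norm_log_one_add_half_le_self (z := a * q ^ i * x)
    (by simpa using abs_aux hq hax i)
  refine h.trans (le_of_eq ?_)
  have : ‖a * q ^ i * x‖ = ‖a‖ * ‖q‖ ^ i * ‖x‖ := by
    simp [map_mul, map_pow]
  rw [this]; ring

lemma one_add_ne {z : ℂ} (h : ‖z‖ ≤ 1/2) : (1 : ℂ) + z ≠ 0 := by
  intro h0
  have hz : z = -1 := by linear_combination h0
  rw [hz] at h; simp at h; norm_num at h

lemma one_add_mem_slitPlane {z : ℂ} (h : ‖z‖ ≤ 1/2) :
    (1 : ℂ) + z ∈ Complex.slitPlane := by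
  rw [Complex.mem_slitPlane_iff]
  left
  have h1 : |z.re| ≤ ‖z‖ := Complex.abs_re_le_norm z
  have : -(1/2 : ℝ) ≤ z.re := by
    have := (abs_le.mp (h1.trans h)).1
    linarith
  simp only [Complex.add_re, Complex.one_re]
  linarith

lemma exp_lterm {q a x : ℂ} (hq : ‖q‖ ≤ 1)
    (hax : ‖a‖ * ‖x‖ ≤ 1/2) (i : ℕ) :
    Complex.exp (lterm q a x i) = 1 + a * q ^ i * x :=
  Complex.exp_log (one_add_ne (abs_aux hq hax i))

lemma lterm_differentiableAt {q a x : ℂ} (hq : ‖q‖ ≤ 1)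
    (hax : ‖a‖ * ‖x‖ ≤ 1/2) (i : ℕ) :
    DifferentiableAt ℂ (fun y => lterm q a y i) x := by
  have hmem : (1 : ℂ) + a * q ^ i * x ∈ Complex.slitPlane :=
    one_add_mem_slitPlane (abs_aux hq hax i)
  have h1 : DifferentiableAt ℂ (fun y : ℂ => 1 + a * q ^ i * y) x := by
    fun_prop
  exact (Complex.differentiableAt_log hmem).comp x h1

noncomputable def pTerm (q p Q1 Q2 Q3 x : ℂ) (i : ℕ) : ℂ :=
  lterm q p x i + lterm q (Q1*Q3*p) x i - lterm q (Q1*p) x i - lterm q (Q1*Q2*Q3*p) x i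

variable {q p Q1 Q2 Q3 x : ℂ}

lemma pTerm_bound (hq : ‖q‖ ≤ 1)
    (h1 : ‖p‖ * ‖x‖ ≤ 1/2)
    (h2 : ‖(Q1*Q3*p)‖ * ‖x‖ ≤ 1/2)
    (h3 : ‖(Q1*p)‖ * ‖x‖ ≤ 1/2)
    (h4 : ‖(Q1*Q2*Q3*p)‖ * ‖x‖ ≤ 1/2) (i : ℕ) :
    ‖pTerm q p Q1 Q2 Q3 x i‖ ≤ 3 * ‖q‖ ^ i := by
  have hqi : (0:ℝ) ≤ ‖q‖ ^ i := pow_nonneg (norm_nonneg q) i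
  have b1 := (lterm_bound hq h1 i).trans (by nlinarith : 3/2 * (‖p‖ * ‖x‖) * ‖q‖ ^ i ≤ 3/4 * ‖q‖ ^ i)
  have b2 := (lterm_bound hq h2 i).trans (by nlinarith : 3/2 * (‖(Q1*Q3*p)‖ * ‖x‖) * ‖q‖ ^ i ≤ 3/4 * ‖q‖ ^ i)
  have b3 := (lterm_bound hq h3 i).trans (by nlinarith : 3/2 * (‖(Q1*p)‖ * ‖x‖) * ‖q‖ ^ i ≤ 3/4 * ‖q‖ ^ i)
  have b4 := (lterm_bound hq h4 i).trans (by nlinarith : 3/2 * (‖(Q1*Q2*Q3*p)‖ * ‖x‖) * ‖q‖ ^ i ≤ 3/4 * ‖q‖ ^ i)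
  unfold pTerm
  calc ‖lterm q p x i + lterm q (Q1*Q3*p) x i - lterm q (Q1*p) x i - lterm q (Q1*Q2*Q3*p) x i‖
      ≤ ‖lterm q p x i + lterm q (Q1*Q3*p) x i - lterm q (Q1*p) x i‖ + ‖lterm q (Q1*Q2*Q3*p) x i‖ :=
        norm_sub_le _ _
    _ ≤ ‖lterm q p x i + lterm q (Q1*Q3*p) x i‖ + ‖lterm q (Q1*p) x i‖ + ‖lterm q (Q1*Q2*Q3*p) x i‖ := by
        have := norm_sub_le (lterm q p x i + lterm q (Q1*Q3*p) x i) (lterm q (Q1*p) x i)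
        linarith
    _ ≤ ‖lterm q p x i‖ + ‖lterm q (Q1*Q3*p) x i‖ + ‖lterm q (Q1*p) x i‖ + ‖lterm q (Q1*Q2*Q3*p) x i‖ := by
        have := norm_add_le (lterm q p x i) (lterm q (Q1*Q3*p) x i)
        linarith
    _ ≤ 3 * ‖q‖ ^ i := by linarith

lemma pTerm_diff (hq : ‖q‖ ≤ 1)
    (h1 : ‖p‖ * ‖x‖ ≤ 1/2)
    (h2 : ‖(Q1*Q3*p)‖ * ‖x‖ ≤ 1/2)
    (h3 : ‖(Q1*p)‖ * ‖x‖ ≤ 1/2)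
    (h4 : ‖(Q1*Q2*Q3*p)‖ * ‖x‖ ≤ 1/2) (i : ℕ) :
    DifferentiableAt ℂ (fun y => pTerm q p Q1 Q2 Q3 y i) x := by
  unfold pTerm
  exact (((lterm_differentiableAt hq h1 i).add (lterm_differentiableAt hq h2 i)).sub
    (lterm_differentiableAt hq h3 i)).sub (lterm_differentiableAt hq h4 i)

lemma exp_pTerm (hq : ‖q‖ ≤ 1)
    (h1 : ‖p‖ * ‖x‖ ≤ 1/2)
    (h2 : ‖(Q1*Q3*p)‖ * ‖x‖ ≤ 1/2)
    (h3 : ‖(Q1*p)‖ * ‖x‖ ≤ 1/2)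
    (h4 : ‖(Q1*Q2*Q3*p)‖ * ‖x‖ ≤ 1/2) (i : ℕ) :
    Complex.exp (pTerm q p Q1 Q2 Q3 x i)
      = ((1 + (p * q ^ i) * x) * (1 + Q1 * Q3 * (p * q ^ i) * x)) /
        ((1 + Q1 * (p * q ^ i) * x) * (1 + Q1 * Q2 * Q3 * (p * q ^ i) * x)) := by
  unfold pTerm
  rw [Complex.exp_sub, Complex.exp_sub, Complex.exp_add,
    exp_lterm hq h1, exp_lterm hq h2, exp_lterm hq h3, exp_lterm hq h4]
  rw [div_div]
  congr 1 <;> ring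



noncomputable def cSeq (q p Q1 Q3 : ℂ) (F : FormalMultilinearSeries ℂ ℂ ℂ) (k : ℕ) : ℂ :=
  q ^ (k : ℤ) * extendedCoeff F k
    + (1 + Q1 * Q3) * p * q ^ ((k : ℤ) - 1) * extendedCoeff F ((k : ℤ) - 1)
    + Q1 * Q3 * q ^ ((k : ℤ) - 1) * extendedCoeff F ((k : ℤ) - 2)

noncomputable def dSeq (q p Q1 Q2 Q3 : ℂ) (F : FormalMultilinearSeries ℂ ℂ ℂ) (k : ℕ) : ℂ :=
  extendedCoeff F k
    + Q1 * (1 + Q2 * Q3) * p * extendedCoeff F ((k : ℤ) - 1)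
    + Q1 ^ 2 * Q2 * Q3 * q * extendedCoeff F ((k : ℤ) - 2)

lemma extendedCoeff_natCast (F : FormalMultilinearSeries ℂ ℂ ℂ) (n : ℕ) :
    extendedCoeff F (n : ℤ) = F.coeff n := by
  simp [extendedCoeff]

lemma hasSum_cSeq {q p Q1 Q3 x : ℂ} {F : FormalMultilinearSeries ℂ ℂ ℂ} {S : ℂ}
    (h1 : HasSum (fun n : ℕ => (q * x) ^ n * F.coeff n) S) :
    HasSum (fun k : ℕ => cSeq q p Q1 Q3 F k * x ^ k)
      ((1 + (1 + Q1 * Q3) * p * x + Q1 * Q3 * q * x ^ 2) * S) := by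
  set b := F.coeff with hb
  have t1 : HasSum (fun n : ℕ => q ^ n * b n * x ^ n) S := by
    have he : (fun n : ℕ => q ^ n * b n * x ^ n) = fun n => (q * x) ^ n * b n := by
      funext n; rw [mul_pow]; ring
    rw [he]; exact h1
  have t2 := t1.mul_left ((1 + Q1 * Q3) * p * x)
  have t3 := t1.mul_left (Q1 * Q3 * q * x ^ 2)
  set s2 : ℕ → ℂ := fun k => if k = 0 then 0 else
    (1 + Q1 * Q3) * p * x * (q ^ (k-1) * b (k-1) * x ^ (k-1)) with hs2
  set s3 : ℕ → ℂ := fun k => if k < 2 then 0 else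
    Q1 * Q3 * q * x ^ 2 * (q ^ (k-2) * b (k-2) * x ^ (k-2)) with hs3
  have t2' : HasSum s2 ((1 + Q1 * Q3) * p * x * S) := by
    have he : (fun n : ℕ => s2 (n + 1)) = fun n =>
        (1 + Q1 * Q3) * p * x * (q ^ n * b n * x ^ n) := by
      funext n; simp [hs2]
    have := (hasSum_nat_add_iff (f := s2) 1).mp (he ▸ t2)
    simpa [hs2] using this
  have t3' : HasSum s3 (Q1 * Q3 * q * x ^ 2 * S) := by
    have he : (fun n : ℕ => s3 (n + 2)) = fun n =>
        Q1 * Q3 * q * x ^ 2 * (q ^ n * b n * x ^ n) := by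
      funext n; simp [hs3]
    have := (hasSum_nat_add_iff (f := s3) 2).mp (he ▸ t3)
    simpa [hs3, Finset.sum_range_succ] using this
  have tsum := (t1.add t2').add t3'
  have hval : S + (1 + Q1 * Q3) * p * x * S + Q1 * Q3 * q * x ^ 2 * S
      = (1 + (1 + Q1 * Q3) * p * x + Q1 * Q3 * q * x ^ 2) * S := by ring
  rw [hval] at tsum
  have hfun : (fun k : ℕ => cSeq q p Q1 Q3 F k * x ^ k)
      = fun k => q ^ k * b k * x ^ k + s2 k + s3 k := by
    funext k
    match k with
    | 0 =>
      simp only [cSeq, hs2, hs3, extendedCoeff]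
      norm_num [hb]
    | 1 =>
      simp only [cSeq, hs2, hs3, extendedCoeff]
      norm_num [hb]
      ring
    | (n+2) =>
      have e1 : ((n+2 : ℕ) : ℤ) - 1 = ((n+1 : ℕ) : ℤ) := by push_cast; ring
      have e2 : ((n+2 : ℕ) : ℤ) - 2 = ((n : ℕ) : ℤ) := by push_cast; ring
      simp only [cSeq, e1, e2, extendedCoeff_natCast, zpow_natCast, hs2, hs3]
      norm_num [hb]
      split_ifs with hh
      · exact absurd hh (by omega)
      ring
  rw [hfun]
  exact tsum

lemma hasSum_dSeq {q p Q1 Q2 Q3 x : ℂ} {F : FormalMultilinearSeries ℂ ℂ ℂ} {S : ℂ}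
    (h0 : HasSum (fun n : ℕ => x ^ n * F.coeff n) S) :
    HasSum (fun k : ℕ => dSeq q p Q1 Q2 Q3 F k * x ^ k)
      ((1 + Q1 * (1 + Q2 * Q3) * p * x + Q1 ^ 2 * Q2 * Q3 * q * x ^ 2) * S) := by
  set b := F.coeff with hb
  have t1 : HasSum (fun n : ℕ => b n * x ^ n) S := by
    have he : (fun n : ℕ => b n * x ^ n) = fun n => x ^ n * b n := by
      funext n; ring
    rw [he]; exact h0
  have t2 := t1.mul_left (Q1 * (1 + Q2 * Q3) * p * x)
  have t3 := t1.mul_left (Q1 ^ 2 * Q2 * Q3 * q * x ^ 2)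
  set s2 : ℕ → ℂ := fun k => if k = 0 then 0 else
    Q1 * (1 + Q2 * Q3) * p * x * (b (k-1) * x ^ (k-1)) with hs2
  set s3 : ℕ → ℂ := fun k => if k < 2 then 0 else
    Q1 ^ 2 * Q2 * Q3 * q * x ^ 2 * (b (k-2) * x ^ (k-2)) with hs3
  have t2' : HasSum s2 (Q1 * (1 + Q2 * Q3) * p * x * S) := by
    have he : (fun n : ℕ => s2 (n + 1)) = fun n =>
        Q1 * (1 + Q2 * Q3) * p * x * (b n * x ^ n) := by
      funext n; simp [hs2]
    have := (hasSum_nat_add_iff (f := s2) 1).mp (he ▸ t2)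
    simpa [hs2] using this
  have t3' : HasSum s3 (Q1 ^ 2 * Q2 * Q3 * q * x ^ 2 * S) := by
    have he : (fun n : ℕ => s3 (n + 2)) = fun n =>
        Q1 ^ 2 * Q2 * Q3 * q * x ^ 2 * (b n * x ^ n) := by
      funext n; simp [hs3]
    have := (hasSum_nat_add_iff (f := s3) 2).mp (he ▸ t3)
    simpa [hs3, Finset.sum_range_succ] using this
  have tsum := (t1.add t2').add t3'
  have hval : S + Q1 * (1 + Q2 * Q3) * p * x * S + Q1 ^ 2 * Q2 * Q3 * q * x ^ 2 * S
      = (1 + Q1 * (1 + Q2 * Q3) * p * x + Q1 ^ 2 * Q2 * Q3 * q * x ^ 2) * S := by ring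
  rw [hval] at tsum
  have hfun : (fun k : ℕ => dSeq q p Q1 Q2 Q3 F k * x ^ k)
      = fun k => b k * x ^ k + s2 k + s3 k := by
    funext k
    match k with
    | 0 =>
      simp only [dSeq, hs2, hs3, extendedCoeff]
      norm_num [hb]
    | 1 =>
      simp only [dSeq, hs2, hs3, extendedCoeff]
      norm_num [hb]
      ring
    | (n+2) =>
      have e1 : ((n+2 : ℕ) : ℤ) - 1 = ((n+1 : ℕ) : ℤ) := by push_cast; ring
      have e2 : ((n+2 : ℕ) : ℤ) - 2 = ((n : ℕ) : ℤ) := by push_cast; ring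
      simp only [dSeq, e1, e2, extendedCoeff_natCast, hs2, hs3]
      norm_num [hb]
      split_ifs with hh
      · exact absurd hh (by omega)
      ring
  rw [hfun]
  exact tsum

lemma ofScalars_coeff (c : ℕ → ℂ) (n : ℕ) :
    (FormalMultilinearSeries.ofScalars ℂ c).coeff n = c n := by
  simp [FormalMultilinearSeries.coeff, FormalMultilinearSeries.ofScalars, Pi.one_def, List.ofFn_const, List.prod_replicate]

set_option maxHeartbeats 1000000 in
/-- for `p² = q` and `0 < |q| < 1`, the function
`Φ̃(x) = ∏_{i≥1} PhiTildeFactor ...` is holomorphic near `0` (it admits a power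
series expansion `F` at `0`) with `Φ̃(0) = 1` (i.e. `F.coeff 0 = 1`), and its
Taylor coefficients `b̃_k = F.coeff k` satisfy, for every `k ≥ 0` (with
`b̃_{−1} = b̃_{−2} = 0`),
`q^k b̃_k + (1+Q1Q3) p q^{k−1} b̃_{k−1} + Q1Q3 q^{k−1} b̃_{k−2}
   = b̃_k + Q1(1+Q2Q3) p b̃_{k−1} + Q1²Q2Q3 q b̃_{k−2}`. -/
theorem closed_topological_vertex_PhiTilde_coeff_recursion
    (q p Q1 Q2 Q3 : ℂ) (hp : p ^ 2 = q)
    (hq0 : 0 < ‖q‖) (hq1 : ‖q‖ < 1) :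
    ∃ F : FormalMultilinearSeries ℂ ℂ ℂ,
      HasFPowerSeriesAt (fun x : ℂ => ∏' i : ℕ, PhiTildeFactor q p Q1 Q2 Q3 x i) F 0 ∧
      F.coeff 0 = 1 ∧
      ∀ k : ℕ,
        q ^ (k : ℤ) * extendedCoeff F k
            + (1 + Q1 * Q3) * p * q ^ ((k : ℤ) - 1) * extendedCoeff F ((k : ℤ) - 1)
            + Q1 * Q3 * q ^ ((k : ℤ) - 1) * extendedCoeff F ((k : ℤ) - 2) =
          extendedCoeff F k
            + Q1 * (1 + Q2 * Q3) * p * extendedCoeff F ((k : ℤ) - 1)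
            + Q1 ^ 2 * Q2 * Q3 * q * extendedCoeff F ((k : ℤ) - 2) := by
  have hq : ‖q‖ ≤ 1 := hq1.le
  set aS : ℝ := ‖p‖ + ‖(Q1*Q3*p)‖ + ‖(Q1*p)‖
      + ‖(Q1*Q2*Q3*p)‖ with haS
  have haS0 : 0 ≤ aS := by positivity
  set r : ℝ := (2*(aS+1))⁻¹ with hrdef
  have hr : 0 < r := by positivity
  have hsm : ∀ a x : ℂ, ‖a‖ ≤ aS → ‖x‖ < r →
      ‖a‖ * ‖x‖ ≤ 1/2 := by
    intro a x ha hx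
    have h1 : ‖a‖ * ‖x‖ ≤ (aS+1) * r := by
      apply mul_le_mul (by linarith) hx.le (norm_nonneg x) (by linarith)
    have h2 : (aS+1) * r = 1/2 := by
      rw [hrdef]; field_simp
    exact le_of_le_of_eq h1 h2
  have ha1 : ‖p‖ ≤ aS := by
    have := norm_nonneg (Q1*Q3*p); have := norm_nonneg (Q1*p)
    have := norm_nonneg (Q1*Q2*Q3*p); rw [haS]; linarith
  have ha2 : ‖(Q1*Q3*p)‖ ≤ aS := by
    have := norm_nonneg p; have := norm_nonneg (Q1*p)
    have := norm_nonneg (Q1*Q2*Q3*p); rw [haS]; linarith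
  have ha3 : ‖(Q1*p)‖ ≤ aS := by
    have := norm_nonneg p; have := norm_nonneg (Q1*Q3*p)
    have := norm_nonneg (Q1*Q2*Q3*p); rw [haS]; linarith
  have ha4 : ‖(Q1*Q2*Q3*p)‖ ≤ aS := by
    have := norm_nonneg p; have := norm_nonneg (Q1*Q3*p)
    have := norm_nonneg (Q1*p); rw [haS]; linarith
  have husum : Summable (fun i : ℕ => 3 * ‖q‖ ^ i) :=
    (summable_geometric_of_lt_one (norm_nonneg q) hq1).mul_left 3
  have hbound : ∀ x : ℂ, ‖x‖ < r → ∀ i : ℕ,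
      ‖pTerm q p Q1 Q2 Q3 x i‖ ≤ 3 * ‖q‖ ^ i := fun x hx i =>
    pTerm_bound hq (hsm p x ha1 hx) (hsm _ x ha2 hx) (hsm _ x ha3 hx) (hsm _ x ha4 hx) i
  have hsummable : ∀ x : ℂ, ‖x‖ < r → Summable (fun i => pTerm q p Q1 Q2 Q3 x i) :=
    fun x hx => Summable.of_norm_bounded husum (hbound x hx)
  have hasprod : ∀ x : ℂ, ‖x‖ < r →
      HasProd (fun i => PhiTildeFactor q p Q1 Q2 Q3 x i)
        (Complex.exp (∑' i, pTerm q p Q1 Q2 Q3 x i)) := by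
    intro x hx
    have hs := (hsummable x hx).hasSum
    have hprod := hs.cexp
    have heq : (Complex.exp ∘ fun i => pTerm q p Q1 Q2 Q3 x i)
        = fun i => PhiTildeFactor q p Q1 Q2 Q3 x i := by
      funext i
      simp only [Function.comp_apply, PhiTildeFactor]
      exact exp_pTerm hq (hsm p x ha1 hx) (hsm _ x ha2 hx) (hsm _ x ha3 hx) (hsm _ x ha4 hx) i
    rwa [heq] at hprod
  have hdiff : DifferentiableOn ℂ (fun x => ∑' i, pTerm q p Q1 Q2 Q3 x i) (Metric.ball 0 r) := by
    apply TendstoLocallyUniformlyOn.differentiableOn (φ := Filter.atTop (α := Finset ℕ))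
    · apply TendstoUniformlyOn.tendstoLocallyUniformlyOn
      apply tendstoUniformlyOn_tsum husum
      intro i x hx
      exact hbound x (by simpa using mem_ball_zero_iff.mp hx) i
    · filter_upwards with t
      apply DifferentiableOn.fun_sum
      intro i _
      intro x hx
      have hx' : ‖x‖ < r := by simpa using mem_ball_zero_iff.mp hx
      exact (pTerm_diff hq (hsm p x ha1 hx') (hsm _ x ha2 hx') (hsm _ x ha3 hx')
        (hsm _ x ha4 hx') i).differentiableWithinAt
    · exact Metric.isOpen_ball
  have hexp_diff : DifferentiableOn ℂ
      (fun x => Complex.exp (∑' i, pTerm q p Q1 Q2 Q3 x i)) (Metric.ball 0 r) :=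
    Complex.differentiable_exp.comp_differentiableOn hdiff
  have hball : Metric.ball (0:ℂ) r ∈ nhds (0:ℂ) := Metric.ball_mem_nhds 0 hr
  have hexp_an : AnalyticAt ℂ (fun x => Complex.exp (∑' i, pTerm q p Q1 Q2 Q3 x i)) 0 :=
    hexp_diff.analyticAt hball
  have hfeq : (fun x => Complex.exp (∑' i, pTerm q p Q1 Q2 Q3 x i))
      =ᶠ[nhds (0:ℂ)] (fun x : ℂ => ∏' i : ℕ, PhiTildeFactor q p Q1 Q2 Q3 x i) := by
    filter_upwards [hball] with x hx
    exact ((hasprod x (by simpa using mem_ball_zero_iff.mp hx)).tprod_eq).symm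
  have han : AnalyticAt ℂ (fun x : ℂ => ∏' i : ℕ, PhiTildeFactor q p Q1 Q2 Q3 x i) 0 :=
    hexp_an.congr hfeq
  obtain ⟨F, hF⟩ := han
  have h0 := hF.coeff_zero (fun _ => (1:ℂ))
  have hf0 : ∏' i : ℕ, PhiTildeFactor q p Q1 Q2 Q3 0 i = 1 := by
    have h1 : ∀ i : ℕ, PhiTildeFactor q p Q1 Q2 Q3 0 i = 1 := by
      intro i; simp [PhiTildeFactor]
    rw [tprod_congr h1, tprod_one]
  refine ⟨F, hF, h0.trans hf0, ?_⟩
  -- the functional equation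
  have hqxle : ∀ x : ℂ, ‖(q*x)‖ ≤ ‖x‖ := fun x => by
    rw [norm_mul]; exact mul_le_of_le_one_left (norm_nonneg x) hq
  have hfun : ∀ x : ℂ, ‖x‖ < r →
      (1 + Q1*(1+Q2*Q3)*p*x + Q1^2*Q2*Q3*q*x^2) * (∏' i, PhiTildeFactor q p Q1 Q2 Q3 x i)
      = (1 + (1+Q1*Q3)*p*x + Q1*Q3*q*x^2) * (∏' i, PhiTildeFactor q p Q1 Q2 Q3 (q*x) i) := by
    intro x hx
    have hqxr : ‖(q*x)‖ < r := lt_of_le_of_lt (hqxle x) hx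
    have hshift : ∀ i : ℕ, pTerm q p Q1 Q2 Q3 x (i+1) = pTerm q p Q1 Q2 Q3 (q*x) i := by
      intro i
      have hl : ∀ a : ℂ, lterm q a x (i+1) = lterm q a (q*x) i := by
        intro a; unfold lterm; congr 1; ring
      simp only [pTerm, hl]
    have hsplit := Summable.tsum_eq_zero_add (hsummable x hx)
    rw [tsum_congr hshift] at hsplit
    have hfx : (∏' i, PhiTildeFactor q p Q1 Q2 Q3 x i)
        = Complex.exp (∑' i, pTerm q p Q1 Q2 Q3 x i) := (hasprod x hx).tprod_eq
    have hfqx : (∏' i, PhiTildeFactor q p Q1 Q2 Q3 (q*x) i)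
        = Complex.exp (∑' i, pTerm q p Q1 Q2 Q3 (q*x) i) := (hasprod (q*x) hqxr).tprod_eq
    rw [hfx, hfqx, hsplit, Complex.exp_add,
      exp_pTerm hq (hsm p x ha1 hx) (hsm _ x ha2 hx) (hsm _ x ha3 hx) (hsm _ x ha4 hx) 0]
    simp only [pow_zero, mul_one]
    have hz3 : ‖(Q1*p*x)‖ ≤ 1/2 := by rw [norm_mul]; exact hsm _ x ha3 hx
    have hz4 : ‖(Q1*Q2*Q3*p*x)‖ ≤ 1/2 := by rw [norm_mul]; exact hsm _ x ha4 hx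
    have hne3 := one_add_ne hz3
    have hne4 := one_add_ne hz4
    have hNA : (1:ℂ) + (1+Q1*Q3)*p*x + Q1*Q3*q*x^2 = (1 + p*x) * (1 + Q1*Q3*p*x) := by
      linear_combination (-(Q1*Q3*x^2)) * hp
    have hDB : (1:ℂ) + Q1*(1+Q2*Q3)*p*x + Q1^2*Q2*Q3*q*x^2
        = (1 + Q1*p*x) * (1 + Q1*Q2*Q3*p*x) := by
      linear_combination (-(Q1^2*Q2*Q3*x^2)) * hp
    rw [hNA, hDB]
    have hDD := mul_inv_cancel₀ (mul_ne_zero hne3 hne4)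
    linear_combination ((1 + p*x) * (1 + Q1*Q3*p*x) * Complex.exp (∑' i, pTerm q p Q1 Q2 Q3 (q*x) i)) * hDD
  -- the power series expansion as sums
  have hFs := hF
  rw [hasFPowerSeriesAt_iff] at hFs
  rw [Metric.eventually_nhds_iff] at hFs
  obtain ⟨ε, hε, hFs⟩ := hFs
  set ρ : ℝ := min r ε with hρdef
  have hρ : 0 < ρ := lt_min hr hε
  have hsum : ∀ z : ℂ, ‖z‖ < ε →
      HasSum (fun n => z ^ n * F.coeff n) (∏' i, PhiTildeFactor q p Q1 Q2 Q3 z i) := by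
    intro z hz
    have hd : dist z 0 < ε := by simpa [Complex.dist_eq] using hz
    have := hFs hd
    simpa [smul_eq_mul] using this
  have hCD : ∀ x : ℂ, ‖x‖ < ρ →
      HasSum (fun k => cSeq q p Q1 Q3 F k * x ^ k)
        ((1 + Q1*(1+Q2*Q3)*p*x + Q1^2*Q2*Q3*q*x^2) * (∏' i, PhiTildeFactor q p Q1 Q2 Q3 x i))
      ∧ HasSum (fun k => dSeq q p Q1 Q2 Q3 F k * x ^ k)
        ((1 + Q1*(1+Q2*Q3)*p*x + Q1^2*Q2*Q3*q*x^2) * (∏' i, PhiTildeFactor q p Q1 Q2 Q3 x i)) := by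
    intro x hx
    have hxr : ‖x‖ < r := lt_of_lt_of_le hx (min_le_left _ _)
    have hxε : ‖x‖ < ε := lt_of_lt_of_le hx (min_le_right _ _)
    have hqxε : ‖(q*x)‖ < ε := lt_of_le_of_lt (hqxle x) hxε
    have hC := hasSum_cSeq (p := p) (Q1 := Q1) (Q3 := Q3) (hsum (q*x) hqxε)
    rw [← hfun x hxr] at hC
    exact ⟨hC, hasSum_dSeq (q := q) (p := p) (Q1 := Q1) (Q2 := Q2) (Q3 := Q3) (hsum x hxε)⟩
  have hPC : HasFPowerSeriesAt
      (fun x => (1 + Q1*(1+Q2*Q3)*p*x + Q1^2*Q2*Q3*q*x^2)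
        * (∏' i, PhiTildeFactor q p Q1 Q2 Q3 x i))
      (FormalMultilinearSeries.ofScalars ℂ (cSeq q p Q1 Q3 F)) 0 := by
    rw [hasFPowerSeriesAt_iff, Metric.eventually_nhds_iff]
    refine ⟨ρ, hρ, fun z hz => ?_⟩
    have hz' : ‖z‖ < ρ := by simpa [Complex.dist_eq] using hz
    have h := (hCD z hz').1
    have h2 : (fun n : ℕ => z ^ n • (FormalMultilinearSeries.ofScalars ℂ
        (cSeq q p Q1 Q3 F)).coeff n) = fun k => cSeq q p Q1 Q3 F k * z ^ k := by
      funext n; rw [ofScalars_coeff, smul_eq_mul, mul_comm]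
    rw [h2, zero_add]
    exact h
  have hPD : HasFPowerSeriesAt
      (fun x => (1 + Q1*(1+Q2*Q3)*p*x + Q1^2*Q2*Q3*q*x^2)
        * (∏' i, PhiTildeFactor q p Q1 Q2 Q3 x i))
      (FormalMultilinearSeries.ofScalars ℂ (dSeq q p Q1 Q2 Q3 F)) 0 := by
    rw [hasFPowerSeriesAt_iff, Metric.eventually_nhds_iff]
    refine ⟨ρ, hρ, fun z hz => ?_⟩
    have hz' : ‖z‖ < ρ := by simpa [Complex.dist_eq] using hz
    have h := (hCD z hz').2
    have h2 : (fun n : ℕ => z ^ n • (FormalMultilinearSeries.ofScalars ℂ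
        (dSeq q p Q1 Q2 Q3 F)).coeff n) = fun k => dSeq q p Q1 Q2 Q3 F k * z ^ k := by
      funext n; rw [ofScalars_coeff, smul_eq_mul, mul_comm]
    rw [h2, zero_add]
    exact h
  have hEq := hPC.eq_formalMultilinearSeries hPD
  have hcd : cSeq q p Q1 Q3 F = dSeq q p Q1 Q2 Q3 F :=
    FormalMultilinearSeries.ofScalars_series_injective ℂ ℂ hEq
  intro k
  exact congrFun hcd k
end
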